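/- Convolution identity for tree-type series: let y(x) = Σ_{n≥0} n^n x^n/n! and for indeterminates V_1, V_2 define y(V_i) accordingly. Then Σ_{j,k ≥ 1} (1/(j+k)) (j^{j+1}/j!) V_1^j (k^k/k!) V_2^k = V_2/(V_2 - V_1) - y(V_1)^2 (y(V_2) - 1)/(y(V_2) - y(V_1)), as an identity of formal power series in V_1 and V_2 (the right side expanded in the ordered Laurent sense with V_1 ≺ V_2). -/

import Mathlib

/- We work in `ℚ[[V_1]][[V_2]]`, bivariate formal power series: the outer
variable is `V_2` and coefficients are formal power series in `V_1`. -/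

/-- `y(V) = ∑_{n≥0} n^n V^n / n! = 1/(1-w(V))`, where `w` is the tree series. -/
noncomputable def ySer : PowerSeries ℚ :=
  PowerSeries.mk fun n => (n : ℚ) ^ n / (Nat.factorial n : ℚ)

/-- `V_1`, viewed in `ℚ[[V_1]][[V_2]]`. -/
noncomputable def V1 : PowerSeries (PowerSeries ℚ) :=
  PowerSeries.C PowerSeries.X

/-- `V_2`, viewed in `ℚ[[V_1]][[V_2]]`. -/
noncomputable def V2 : PowerSeries (PowerSeries ℚ) := PowerSeries.X

/-- `y(V_1)`, viewed in `ℚ[[V_1]][[V_2]]`. -/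
noncomputable def yV1 : PowerSeries (PowerSeries ℚ) :=
  PowerSeries.C ySer

/-- `y(V_2)`, viewed in `ℚ[[V_1]][[V_2]]`. -/
noncomputable def yV2 : PowerSeries (PowerSeries ℚ) :=
  PowerSeries.map PowerSeries.C ySer

/-- The double series `S = ∑_{j,k≥1} (1/(j+k)) (j^{j+1}/j!) V_1^j (k^k/k!) V_2^k`. -/
noncomputable def Sser : PowerSeries (PowerSeries ℚ) :=
  PowerSeries.mk fun k =>
    if k = 0 then 0 else
      PowerSeries.mk fun j =>
        if j = 0 then 0 else
          (1 / ((j : ℚ) + (k : ℚ))) * ((j : ℚ) ^ (j + 1) / (Nat.factorial j : ℚ)) *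
            ((k : ℚ) ^ k / (Nat.factorial k : ℚ))

section ScalarPart
open Finset

lemma findiff : ∀ n p : ℕ, p < n →
    ∑ k ∈ range (n+1), (-1:ℚ)^k * (n.choose k) * (k:ℚ)^p = 0 := by
  intro n
  induction n with
  | zero => intro p hp; omega
  | succ n ih =>
    intro p hp
    rcases Nat.eq_zero_or_pos p with rfl | hp1
    · have h := @Int.alternating_sum_range_choose (n+1)
      rw [if_neg (Nat.succ_ne_zero n)] at h
      have h2 : ((∑ m ∈ range (n + 1 + 1), (-1:ℤ) ^ m * ((n+1).choose m) : ℤ) : ℚ) = 0 := by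
        rw [h]; norm_num
      push_cast at h2
      simpa using h2
    · obtain ⟨q, rfl⟩ : ∃ q, p = q + 1 := ⟨p - 1, by omega⟩
      rw [Finset.sum_range_succ']
      have hstep : ∀ k ∈ range (n+1),
          (-1:ℚ)^(k+1) * ((n+1).choose (k+1)) * ((k+1:ℕ):ℚ)^(q+1)
            = -(n+1) * ((-1:ℚ)^k * (n.choose k) * ((k+1:ℕ):ℚ)^q) := by
        intro k _
        have hc : ((n+1).choose (k+1) : ℚ) * ((k:ℚ)+1) = ((n:ℚ)+1) * (n.choose k) := by
          have h0 := Nat.add_one_mul_choose_eq n k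
          have h1 : ((n+1) * n.choose k : ℕ) = ((n+1).choose (k+1) * (k+1) : ℕ) := h0
          exact_mod_cast h1.symm
        push_cast
        linear_combination ((-1:ℚ)^(k+1) * ((k:ℚ)+1)^q) * hc
      rw [Finset.sum_congr rfl hstep]
      simp only [Nat.cast_zero]
      rw [zero_pow (by omega : q + 1 ≠ 0)]
      rw [← Finset.mul_sum]
      have hmain : ∑ k ∈ range (n+1), (-1:ℚ)^k * (n.choose k) * ((k+1:ℕ):ℚ)^q = 0 := by
        have hexp : ∀ k ∈ range (n+1), (-1:ℚ)^k * (n.choose k) * ((k+1:ℕ):ℚ)^q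
            = ∑ j ∈ range (q+1), (q.choose j) * ((-1:ℚ)^k * (n.choose k) * (k:ℚ)^j) := by
          intro k _
          have hbin : ((k+1:ℕ):ℚ)^q = ∑ j ∈ range (q+1), (q.choose j) * (k:ℚ)^j := by
            push_cast
            rw [add_pow]
            exact Finset.sum_congr rfl fun j _ => by rw [one_pow]; ring
          rw [hbin, Finset.mul_sum]
          exact Finset.sum_congr rfl fun j _ => by ring
        rw [Finset.sum_congr rfl hexp, Finset.sum_comm]
        apply Finset.sum_eq_zero
        intro j hj
        rw [← Finset.mul_sum, ih j (by simp at hj; omega), mul_zero]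
      rw [hmain]
      ring

end ScalarPart

section PolyPart
open Finset Polynomial
noncomputable def polyQ (m : ℕ) : Polynomial ℚ :=
  ∑ k ∈ range (m+1),
    C (((m+1).choose (k+1) : ℚ) * ((k:ℚ)+1)^k) * (X + C ((m-k : ℕ) : ℚ))^(m-k)

noncomputable def polyS (m : ℕ) : Polynomial ℚ :=
  (X + C ((m+1 : ℕ) : ℚ))^(m+1) - X * (X + C ((m+1 : ℕ) : ℚ))^m

lemma natid (n k : ℕ) (hk : k ≤ n) :
    (n + 1 - k) * (n+1).choose k = (n+1) * n.choose k := by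
  have h2 := Nat.add_one_mul_choose_eq n (n-k)
  have h3 : (n+1).choose ((n-k).succ) = (n+1).choose k := by
    have h4 : (n-k).succ ≤ n + 1 := by omega
    rw [← Nat.choose_symm h4]
    congr 1
    omega
  have hs : (n-k).succ = n+1-k := by omega
  calc (n+1-k) * (n+1).choose k = (n+1).choose ((n-k).succ) * (n-k).succ := by
        rw [h3, hs, mul_comm]
    _ = n.succ * n.choose (n-k) := h2.symm
    _ = (n+1) * n.choose k := by rw [Nat.choose_symm hk, Nat.succ_eq_add_one]

lemma hderQ (m : ℕ) :
    derivative (polyQ (m+1)) = C ((m:ℚ)+2) * (polyQ m).comp (X + 1) := by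
  unfold polyQ
  rw [derivative_sum, Finset.sum_range_succ]
  have h0 : m + 1 - (m + 1) = 0 := Nat.sub_self _
  rw [h0]
  simp only [pow_zero, mul_one, derivative_C, add_zero]
  rw [Polynomial.sum_comp, Finset.mul_sum]
  apply Finset.sum_congr rfl
  intro k hk
  have hkm : k ≤ m := Nat.lt_succ_iff.mp (mem_range.mp hk)
  have he : m + 1 - k = (m - k) + 1 := by omega
  rw [he]
  rw [derivative_C_mul, derivative_pow, derivative_add, derivative_X, derivative_C, add_zero,
    mul_one]
  rw [mul_comp, C_comp, pow_comp, add_comp, X_comp, C_comp]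
  have hsub : (m - k) + 1 - 1 = m - k := by omega
  rw [hsub]
  have hcast : (((m - k) + 1 : ℕ) : ℚ) = ((m - k : ℕ) : ℚ) + 1 := by push_cast; ring
  rw [hcast]
  have hbase : X + Polynomial.C (((m - k : ℕ) : ℚ) + 1) = X + 1 + C ((m-k : ℕ) : ℚ) := by
    rw [map_add, map_one]; ring
  rw [hbase]
  have hnat := natid (m+1) (k+1) (by omega)
  have hq : (((m+1+1).choose (k+1) : ℕ) : ℚ) * (((m-k:ℕ):ℚ) + 1) =
      ((m:ℚ) + 2) * (((m+1).choose (k+1) : ℕ) : ℚ) := by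
    have h5 : m + 1 + 1 - (k + 1) = (m - k) + 1 := by omega
    rw [h5] at hnat
    have := congrArg (fun x : ℕ => (x : ℚ)) hnat
    push_cast at this ⊢
    nlinarith [this]
  rw [← mul_assoc, ← mul_assoc, ← map_mul, ← map_mul]
  have hco : (((m+1+1).choose (k+1) : ℕ) : ℚ) * ((k:ℚ)+1)^k * (((m-k:ℕ):ℚ) + 1)
      = ((m:ℚ) + 2) * ((((m+1).choose (k+1) : ℕ) : ℚ) * ((k:ℚ)+1)^k) := by
    linear_combination ((k:ℚ)+1)^k * hq
  rw [hco]

lemma hderS (m : ℕ) :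
    derivative (polyS (m+1)) = C ((m:ℚ)+2) * (polyS m).comp (X + 1) := by
  unfold polyS
  simp only [derivative_sub, derivative_mul, derivative_pow, derivative_add, derivative_X,
    derivative_C, sub_comp, mul_comp, pow_comp, add_comp, X_comp, C_comp,
    add_zero, mul_one, one_mul, Nat.add_sub_cancel]
  push_cast
  simp only [map_add, map_one, map_ofNat]
  ring

lemma evalS (m : ℕ) : eval (-(((m+1+1:ℕ)):ℚ)) (polyS (m+1)) = 0 := by
  unfold polyS
  simp only [eval_sub, eval_mul, eval_pow, eval_add, eval_X, eval_C]
  have hz : (-(((m+1+1:ℕ)):ℚ) + ((m+1+1:ℕ):ℚ)) = 0 := by ring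
  rw [hz, zero_pow (by omega : m + 1 + 1 ≠ 0), zero_pow (by omega : m + 1 ≠ 0)]
  ring

lemma evalQ (m : ℕ) : eval (-(((m+1+1:ℕ)):ℚ)) (polyQ (m+1)) = 0 := by
  have hfd := findiff (m+2) (m+1) (by omega)
  rw [Finset.sum_range_succ'] at hfd
  have hz0 : (0:ℚ)^(m+1) = 0 := zero_pow (by omega)
  simp only [Nat.cast_zero, hz0, mul_zero, add_zero] at hfd
  unfold polyQ
  rw [eval_finset_sum]
  have hterm : ∀ k ∈ range (m+1+1),
      eval (-(((m+1+1:ℕ)):ℚ))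
        (C (((m+1+1).choose (k+1):ℚ) * ((k:ℚ)+1)^k) * (X + C ((m+1-k : ℕ) : ℚ))^(m+1-k))
      = (-1:ℚ)^m * ((-1:ℚ)^(k+1) * ((m+2).choose (k+1) : ℚ) * ((k:ℚ)+1)^(m+1)) := by
    intro k hk
    have hk' : k ≤ m+1 := Nat.lt_succ_iff.mp (mem_range.mp hk)
    rw [eval_mul, eval_C, eval_pow, eval_add, eval_X, eval_C]
    have hc : (-(((m+1+1:ℕ)):ℚ) + ((m+1-k : ℕ) : ℚ)) = -((k:ℚ)+1) := by
      rw [Nat.cast_sub hk']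
      push_cast
      ring
    rw [hc]
    rw [neg_pow]
    have hpk : ((k:ℚ)+1)^k * ((k:ℚ)+1)^(m+1-k) = ((k:ℚ)+1)^(m+1) := by
      rw [← pow_add]; congr 1; omega
    have h3 : (-1:ℚ)^(k+1) * (-1:ℚ)^(k+1) = 1 := by
      rw [← mul_pow]; norm_num
    have hsign : (-1:ℚ)^(m+1-k) * (-1:ℚ)^(k+1) = (-1:ℚ)^(m+2) := by
      rw [← pow_add]; congr 1; omega
    have h2 : (-1:ℚ)^(m+1-k) = (-1:ℚ)^m * (-1:ℚ)^(k+1) := by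
      calc (-1:ℚ)^(m+1-k) = (-1:ℚ)^(m+1-k) * ((-1:ℚ)^(k+1) * (-1:ℚ)^(k+1)) := by
            rw [h3, mul_one]
        _ = (-1:ℚ)^(m+2) * (-1:ℚ)^(k+1) := by rw [← mul_assoc, hsign]
        _ = (-1:ℚ)^m * (-1:ℚ)^(k+1) := by rw [pow_add]; norm_num
    have hch : ((m+1+1).choose (k+1) : ℚ) = ((m+2).choose (k+1) : ℚ) := by norm_num
    rw [hch]
    rw [h2]
    linear_combination ((m+2).choose (k+1) : ℚ) * (-1:ℚ)^m * (-1:ℚ)^(k+1) * hpk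
  rw [Finset.sum_congr rfl hterm, ← Finset.mul_sum]
  have : ∑ k ∈ range (m+1+1), ((-1:ℚ)^(k+1) * ((m+2).choose (k+1) : ℚ) * ((k:ℚ)+1)^(m+1)) = 0 := by
    have := hfd
    convert this using 2 with k
    push_cast
    ring
  rw [this, mul_zero]

lemma QS : ∀ m, polyQ m = polyS m := by
  intro m
  induction m with
  | zero =>
    unfold polyQ polyS
    simp
  | succ m ih =>
    have hd : derivative (polyQ (m+1) - polyS (m+1)) = 0 := by
      rw [derivative_sub, hderQ, hderS, ih, sub_self]
    have hC := Polynomial.eq_C_of_natDegree_eq_zero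
      (Polynomial.natDegree_eq_zero_of_derivative_eq_zero hd)
    have h0 : (polyQ (m+1) - polyS (m+1)).eval (-(((m+1+1:ℕ)):ℚ)) = 0 := by
      rw [eval_sub, evalQ, evalS, sub_self]
    rw [hC, eval_C] at h0
    have := hC
    rw [h0] at this
    simp only [map_zero] at this
    exact sub_eq_zero.mp this

lemma treeT1 (m : ℕ) :
    ∑ k ∈ range (m+1), ((m+1).choose (k+1) : ℚ) * ((k:ℚ)+1)^k * ((m-k : ℕ):ℚ)^(m-k)
      = ((m+1:ℕ):ℚ)^(m+1) := by
  have h := congrArg (eval (0:ℚ)) (QS m)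
  unfold polyQ polyS at h
  rw [eval_finset_sum] at h
  simp only [eval_sub, eval_mul, eval_pow, eval_add, eval_X, eval_C, zero_add, zero_mul,
    sub_zero, mul_zero] at h
  convert h using 1

end PolyPart

section SeriesPart
open Finset PowerSeries
noncomputable def tSer : PowerSeries ℚ :=
  PowerSeries.mk fun n => if n = 0 then 0 else (n : ℚ)^(n-1) / (Nat.factorial n : ℚ)

lemma treeT1' (m : ℕ) : ((m+1:ℕ):ℚ)^(m+1)/((m+1).factorial : ℚ)
    = ∑ k ∈ range (m+1),
        ((((m-k:ℕ)):ℚ)^(m-k)/(((m-k).factorial : ℚ))) * ((((k:ℚ)+1))^k/(((k+1).factorial : ℚ))) := by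
  rw [← treeT1 m, Finset.sum_div]
  apply Finset.sum_congr rfl
  intro k hk
  have hk' : k + 1 ≤ m + 1 := by simpa [Nat.lt_succ_iff] using mem_range.mp hk
  rw [Nat.cast_choose ℚ hk']
  have he : m + 1 - (k+1) = m - k := by omega
  rw [he]
  have h1 : ((m+1).factorial : ℚ) ≠ 0 := by exact_mod_cast (m+1).factorial_ne_zero
  have h2 : ((k+1).factorial : ℚ) ≠ 0 := by exact_mod_cast (k+1).factorial_ne_zero
  have h3 : (((m-k).factorial : ℕ) : ℚ) ≠ 0 := by exact_mod_cast (m-k).factorial_ne_zero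
  field_simp

lemma key1 : ySer * (1 - tSer) = 1 := by
  ext n
  rw [PowerSeries.coeff_mul]
  rcases n with _ | m
  · simp [ySer, tSer]
  · rw [Nat.sum_antidiagonal_eq_sum_range_succ_mk]
    rw [Finset.sum_range_succ]
    have hlast : (coeff (m+1)) ySer * (coeff (m+1-(m+1))) (1 - tSer)
        = ((m+1:ℕ):ℚ)^(m+1)/((m+1).factorial : ℚ) := by
      rw [Nat.sub_self]
      simp [ySer, tSer]
    rw [hlast]
    have hstep : ∀ k ∈ range (m+1),
        (coeff k) ySer * (coeff (m+1-k)) (1 - tSer)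
          = -((((k:ℚ))^k/((k.factorial : ℚ))) * ((((m+1-k:ℕ)):ℚ)^(m+1-k-1)/(((m+1-k).factorial : ℚ)))) := by
      intro k hk
      have hk' : k < m + 1 := mem_range.mp hk
      have hne : m + 1 - k ≠ 0 := by omega
      rw [map_sub]
      rw [PowerSeries.coeff_one, if_neg hne]
      simp only [ySer, tSer, coeff_mk, if_neg hne, zero_sub]
      ring
    rw [Finset.sum_congr rfl hstep]
    rw [Finset.sum_neg_distrib]
    have hsum : ∑ k ∈ range (m+1),
        ((((k:ℚ))^k/((k.factorial:ℚ))) * ((((m+1-k:ℕ)):ℚ)^(m+1-k-1)/(((m+1-k).factorial : ℚ))))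
        = ((m+1:ℕ):ℚ)^(m+1)/((m+1).factorial : ℚ) := by
      rw [treeT1' m]
      conv_lhs => rw [← Finset.sum_range_reflect]
      apply Finset.sum_congr rfl
      intro k hk
      have hk' : k ≤ m := Nat.lt_succ_iff.mp (mem_range.mp hk)
      have h1 : m + 1 - 1 - k = m - k := by omega
      have h2 : m + 1 - (m - k) = k + 1 := by omega
      have h3 : k + 1 - 1 = k := by omega
      rw [h1, h2, h3]
      have h4 : (((k+1:ℕ)):ℚ) = (k:ℚ) + 1 := by push_cast; ring
      rw [h4]
    rw [hsum]
    simp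

noncomputable def Dop (f : PowerSeries ℚ) : PowerSeries ℚ :=
  PowerSeries.mk fun n => (n:ℚ) * coeff n f

lemma coeff_Dop (n : ℕ) (f : PowerSeries ℚ) : coeff n (Dop f) = (n:ℚ) * coeff n f :=
  coeff_mk n _

lemma Dop_add (f g : PowerSeries ℚ) : Dop (f + g) = Dop f + Dop g := by
  ext n; simp [coeff_Dop]; ring

lemma Dop_sub (f g : PowerSeries ℚ) : Dop (f - g) = Dop f - Dop g := by
  ext n; simp [coeff_Dop]; ring

lemma Dop_one : Dop 1 = 0 := by
  ext n; simp [coeff_Dop, PowerSeries.coeff_one]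

lemma Dop_C (a : ℚ) : Dop (PowerSeries.C a) = 0 := by
  ext n; simp [coeff_Dop, PowerSeries.coeff_C]
  intro h; simp [h]


lemma Dop_mul (f g : PowerSeries ℚ) : Dop (f * g) = Dop f * g + f * Dop g := by
  ext n
  rw [map_add, coeff_Dop, PowerSeries.coeff_mul, PowerSeries.coeff_mul, PowerSeries.coeff_mul,
    Finset.mul_sum, ← Finset.sum_add_distrib]
  apply Finset.sum_congr rfl
  intro p hp
  have hpn : p.1 + p.2 = n := Finset.HasAntidiagonal.mem_antidiagonal.mp hp
  rw [coeff_Dop, coeff_Dop, ← hpn]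
  push_cast
  ring

lemma Dop_sum {α : Type*} (s : Finset α) (F : α → PowerSeries ℚ) :
    Dop (∑ a ∈ s, F a) = ∑ a ∈ s, Dop (F a) := by
  ext n
  rw [coeff_Dop, map_sum, map_sum, Finset.mul_sum]
  exact Finset.sum_congr rfl fun a _ => (coeff_Dop n (F a)).symm

lemma Dop_t : Dop tSer = ySer - 1 := by
  ext n
  rw [coeff_Dop, map_sub]
  rcases n with _ | m
  · simp [tSer, ySer]
  · simp only [tSer, ySer, coeff_mk, PowerSeries.coeff_one, if_neg (Nat.succ_ne_zero m),
      Nat.succ_ne_zero, sub_zero]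
    simp only [if_false, sub_zero]
    have h3 : m + 1 - 1 = m := rfl
    rw [h3]
    have hF : ((m+1).factorial : ℚ) ≠ 0 := by exact_mod_cast (m+1).factorial_ne_zero
    field_simp
    ring

lemma Dop_y : Dop ySer = ySer^3 - ySer^2 := by
  have h2 : Dop (ySer * (1 - tSer)) = 0 := by rw [key1]; exact Dop_one
  rw [Dop_mul, Dop_sub, Dop_one, Dop_t, zero_sub] at h2
  have h3 : Dop ySer * (1 - tSer) = ySer * (ySer - 1) := by
    have := h2
    ring_nf at this ⊢
    linear_combination this
  calc Dop ySer = Dop ySer * (ySer * (1 - tSer)) := by rw [key1, mul_one]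
    _ = (Dop ySer * (1 - tSer)) * ySer := by ring
    _ = (ySer * (ySer - 1)) * ySer := by rw [h3]
    _ = ySer^3 - ySer^2 := by ring

lemma Dop_sum' {α : Type*} (s : Finset α) (F : α → PowerSeries ℚ) :
    Dop (∑ a ∈ s, F a) = ∑ a ∈ s, Dop (F a) := by
  ext n
  rw [coeff_Dop, map_sum, map_sum, Finset.mul_sum]
  exact Finset.sum_congr rfl fun a _ => (coeff_Dop n (F a)).symm

abbrev B := PowerSeries (PowerSeries ℚ)

noncomputable def Eop (f : B) : B :=
  PowerSeries.mk fun n => PowerSeries.C (n:ℚ) * (PowerSeries.coeff n f)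
    + Dop (PowerSeries.coeff n f)

lemma coeff_Eop (n : ℕ) (f : B) : PowerSeries.coeff n (Eop f)
    = PowerSeries.C (n:ℚ) * (PowerSeries.coeff n f)
      + Dop (PowerSeries.coeff n f) := coeff_mk n _

lemma Eop_sub (f g : B) : Eop (f - g) = Eop f - Eop g := by
  refine PowerSeries.ext fun n => ?_
  simp only [coeff_Eop, map_sub]
  have : Dop (coeff n f - coeff n g)
      = Dop (coeff n f) - Dop (coeff n g) := by
    have h := Dop_add (coeff n f - coeff n g)
      (coeff n g)
    rw [sub_add_cancel] at h
    linear_combination -h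
  rw [this]
  ring

lemma Eop_mul (f g : B) : Eop (f * g) = Eop f * g + f * Eop g := by
  refine PowerSeries.ext fun n => ?_
  rw [map_add, coeff_Eop, PowerSeries.coeff_mul, PowerSeries.coeff_mul, PowerSeries.coeff_mul,
    Finset.mul_sum, Dop_sum', ← Finset.sum_add_distrib, ← Finset.sum_add_distrib]
  apply Finset.sum_congr rfl
  intro p hp
  have hpn : p.1 + p.2 = n := Finset.HasAntidiagonal.mem_antidiagonal.mp hp
  rw [coeff_Eop, coeff_Eop, Dop_mul, ← hpn]
  have hc : (PowerSeries.C ((p.1 + p.2 : ℕ):ℚ)) =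
      PowerSeries.C (p.1:ℚ) + PowerSeries.C (p.2:ℚ) := by
    rw [← map_add]
    congr 1
    push_cast
    ring
  rw [hc]
  ring

lemma Dop_zero : Dop 0 = 0 := by
  have := Dop_C 0
  simpa using this

lemma Dop_X : Dop PowerSeries.X = PowerSeries.X := by
  ext n
  rw [coeff_Dop, PowerSeries.coeff_X]
  split_ifs with h
  · rw [h]; norm_num
  · rw [mul_zero]

lemma Eop_V1 : Eop V1 = V1 := by
  refine PowerSeries.ext fun n => ?_
  rw [coeff_Eop]
  unfold V1
  rw [PowerSeries.coeff_C]
  split_ifs with h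
  · rw [h]; simp [Dop_X]
  · simp [Dop_zero]

lemma Eop_V2 : Eop V2 = V2 := by
  refine PowerSeries.ext fun n => ?_
  rw [coeff_Eop]
  unfold V2
  rw [PowerSeries.coeff_X]
  split_ifs with h
  · rw [h]; simp [Dop_one]
  · simp [Dop_zero]

lemma Eop_yV1 : Eop yV1 = yV1^3 - yV1^2 := by
  refine PowerSeries.ext fun n => ?_
  rw [coeff_Eop]
  unfold yV1
  rw [show (PowerSeries.C ySer)^3 - (PowerSeries.C ySer)^2
      = PowerSeries.C (ySer^3 - ySer^2) by rw [map_sub, map_pow, map_pow]]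
  rw [PowerSeries.coeff_C, PowerSeries.coeff_C]
  split_ifs with h
  · rw [h]; simp [Dop_y]
  · simp [Dop_zero]

lemma Eop_yV2 : Eop yV2 = yV2^3 - yV2^2 := by
  refine PowerSeries.ext fun n => ?_
  rw [coeff_Eop]
  unfold yV2
  rw [show (PowerSeries.map PowerSeries.C ySer)^3 - (PowerSeries.map PowerSeries.C ySer)^2
      = PowerSeries.map PowerSeries.C (ySer^3 - ySer^2) by rw [map_sub, map_pow, map_pow]]
  rw [PowerSeries.coeff_map, PowerSeries.coeff_map, ← Dop_y, coeff_Dop]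
  rw [Dop_C, add_zero, ← map_mul]

lemma Eop_S : Eop Sser = (yV1^3 - yV1^2) * (yV2 - 1) := by
  have hC : yV1^3 - yV1^2 = PowerSeries.C (ySer^3 - ySer^2) := by
    unfold yV1; rw [map_sub, map_pow, map_pow]
  rw [hC, ← Dop_y]
  refine PowerSeries.ext fun k => ?_
  rw [coeff_Eop, PowerSeries.coeff_C_mul]
  unfold Sser
  rw [PowerSeries.coeff_mk]
  rcases k with _ | m
  · rw [if_pos rfl, mul_zero, Dop_zero, add_zero]
    unfold yV2
    rw [map_sub, PowerSeries.coeff_map]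
    have h0 : (PowerSeries.coeff 0) ySer = 1 := by simp [ySer]
    rw [h0]
    have h1 : (PowerSeries.coeff 0) (1 : B) = 1 := by simp
    rw [h1]
    simp
  · rw [if_neg (Nat.succ_ne_zero m)]
    refine PowerSeries.ext fun j => ?_
    rw [map_add, PowerSeries.coeff_C_mul, coeff_Dop, PowerSeries.coeff_mk]
    unfold yV2
    rw [map_sub, PowerSeries.coeff_map]
    have h1 : (PowerSeries.coeff (m+1)) (1 : B) = 0 := by
      rw [PowerSeries.coeff_one, if_neg (Nat.succ_ne_zero m)]
    rw [h1, sub_zero, PowerSeries.coeff_mul_C, coeff_Dop]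
    simp only [ySer, coeff_mk]
    rcases j with _ | i
    · simp
    · rw [if_neg (Nat.succ_ne_zero i)]
      have hne : ((i+1 : ℕ):ℚ) + ((m+1 : ℕ):ℚ) ≠ 0 := by
        push_cast; positivity
      field_simp
      ring

lemma Eop_one : Eop 1 = 0 := by
  refine PowerSeries.ext fun n => ?_
  rw [coeff_Eop, PowerSeries.coeff_one]
  split_ifs with h
  · rw [h]; simp [Dop_one]
  · simp [Dop_zero]

noncomputable def Dd : B := (V2 - V1) * (yV2 - yV1)
noncomputable def Nn : B := V2 * (yV2 - yV1) - yV1^2 * (yV2 - 1) * (V2 - V1)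
noncomputable def Gg : B := Sser * Dd - Nn

lemma keyrel : Dd * Eop Gg = Eop Dd * Gg := by
  unfold Gg Dd Nn
  simp only [pow_two, Eop_sub, Eop_mul, Eop_S, Eop_V1, Eop_V2, Eop_yV1, Eop_yV2, Eop_one]
  ring

noncomputable def dco (p q : ℕ) (f : B) : ℚ :=
  PowerSeries.coeff p (PowerSeries.coeff q f)

lemma dco_Eop (p q : ℕ) (f : B) : dco p q (Eop f) = ((p:ℚ) + (q:ℚ)) * dco p q f := by
  unfold dco
  rw [coeff_Eop, map_add, PowerSeries.coeff_C_mul, coeff_Dop]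
  ring

lemma dco_mul (p q : ℕ) (f g : B) : dco p q (f * g)
    = ∑ x ∈ antidiagonal q, ∑ y ∈ antidiagonal p,
        dco y.1 x.1 f * dco y.2 x.2 g := by
  unfold dco
  rw [PowerSeries.coeff_mul, map_sum]
  exact Finset.sum_congr rfl fun x _ => PowerSeries.coeff_mul p _ _

lemma dco_sub (p q : ℕ) (f g : B) : dco p q (f - g) = dco p q f - dco p q g := by
  unfold dco; rw [map_sub, map_sub]

lemma keycoeff (p q : ℕ) :
    ∑ x ∈ antidiagonal q, ∑ y ∈ antidiagonal p,
      dco y.1 x.1 Dd * (((y.2:ℚ) + (x.2:ℚ)) - ((y.1:ℚ) + (x.1:ℚ))) * dco y.2 x.2 Gg = 0 := by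
  have h := congrArg (dco p q) keyrel
  rw [dco_mul, dco_mul] at h
  have h2 : ∑ x ∈ antidiagonal q, ∑ y ∈ antidiagonal p,
      (dco y.1 x.1 Dd * (((y.2:ℚ) + (x.2:ℚ)) * dco y.2 x.2 Gg)
        - ((y.1:ℚ) + (x.1:ℚ)) * dco y.1 x.1 Dd * dco y.2 x.2 Gg) = 0 := by
    rw [Finset.sum_congr rfl (fun x _ => Finset.sum_sub_distrib _ _), Finset.sum_sub_distrib]
    rw [sub_eq_zero]
    calc ∑ x ∈ antidiagonal q, ∑ y ∈ antidiagonal p,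
          dco y.1 x.1 Dd * (((y.2:ℚ) + (x.2:ℚ)) * dco y.2 x.2 Gg)
        = ∑ x ∈ antidiagonal q, ∑ y ∈ antidiagonal p,
          dco y.1 x.1 Dd * dco y.2 x.2 (Eop Gg) := by
          refine Finset.sum_congr rfl fun x _ => Finset.sum_congr rfl fun y _ => ?_
          rw [dco_Eop]
      _ = ∑ x ∈ antidiagonal q, ∑ y ∈ antidiagonal p,
          dco y.1 x.1 (Eop Dd) * dco y.2 x.2 Gg := h
      _ = ∑ x ∈ antidiagonal q, ∑ y ∈ antidiagonal p,
          ((y.1:ℚ) + (x.1:ℚ)) * dco y.1 x.1 Dd * dco y.2 x.2 Gg := by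
          refine Finset.sum_congr rfl fun x _ => Finset.sum_congr rfl fun y _ => ?_
          rw [dco_Eop]
  rw [← h2]
  refine Finset.sum_congr rfl fun x _ => Finset.sum_congr rfl fun y _ => ?_
  ring

lemma dco_V1 (p q : ℕ) : dco p q V1 = if p = 1 ∧ q = 0 then 1 else 0 := by
  unfold dco V1
  by_cases hq : q = 0
  · subst hq
    rw [PowerSeries.coeff_C, if_pos rfl, PowerSeries.coeff_X]
    by_cases hp : p = 1 <;> simp [hp]
  · rw [PowerSeries.coeff_C, if_neg hq, if_neg (by tauto)]
    simp

lemma dco_V2 (p q : ℕ) : dco p q V2 = if p = 0 ∧ q = 1 then 1 else 0 := by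
  unfold dco V2
  by_cases hq : q = 1
  · subst hq
    rw [PowerSeries.coeff_X, if_pos rfl, PowerSeries.coeff_one]
    by_cases hp : p = 0 <;> simp [hp]
  · rw [PowerSeries.coeff_X, if_neg hq, if_neg (by tauto)]
    simp

lemma dco_yV1 (p q : ℕ) : dco p q yV1 = if q = 0 then PowerSeries.coeff p ySer else 0 := by
  unfold dco yV1
  rw [PowerSeries.coeff_C]
  split_ifs <;> simp

lemma dco_yV2 (p q : ℕ) : dco p q yV2 = if p = 0 then PowerSeries.coeff q ySer else 0 := by
  unfold dco yV2
  rw [PowerSeries.coeff_map, PowerSeries.coeff_C]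

lemma dco_one (p q : ℕ) : dco p q (1 : B) = if p = 0 ∧ q = 0 then 1 else 0 := by
  unfold dco
  by_cases hq : q = 0
  · subst hq
    rw [PowerSeries.coeff_one, if_pos rfl, PowerSeries.coeff_one]
    by_cases hp : p = 0 <;> simp [hp]
  · rw [PowerSeries.coeff_one, if_neg hq, if_neg (by tauto)]
    simp

lemma ySer0 : PowerSeries.coeff 0 ySer = 1 := by simp [ySer]
lemma ySer1 : PowerSeries.coeff 1 ySer = 1 := by simp [ySer]
lemma ySer2 : PowerSeries.coeff 2 ySer = 2 := by
  simp [ySer]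
  norm_num [Nat.factorial]

lemma dco_Sser (p q : ℕ) : dco p q Sser =
    if p = 0 ∨ q = 0 then 0 else
      (1 / ((p : ℚ) + (q : ℚ))) * ((p : ℚ) ^ (p + 1) / (Nat.factorial p : ℚ)) *
        ((q : ℚ) ^ q / (Nat.factorial q : ℚ)) := by
  unfold dco Sser
  rw [PowerSeries.coeff_mk]
  by_cases hq : q = 0
  · rw [if_pos hq, if_pos (Or.inr hq)]
    simp
  · rw [if_neg hq, PowerSeries.coeff_mk]
    by_cases hp : p = 0
    · rw [if_pos hp, if_pos (Or.inl hp)]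
    · rw [if_neg hp, if_neg (by tauto)]

lemma dco_yV1sq (p q : ℕ) : dco p q (yV1^2)
    = if q = 0 then PowerSeries.coeff p (ySer^2) else 0 := by
  unfold dco yV1
  rw [← map_pow, PowerSeries.coeff_C]
  split_ifs <;> simp

lemma ySq0 : PowerSeries.coeff 0 (ySer^2) = 1 := by
  rw [pow_two, PowerSeries.coeff_mul]
  simp [Nat.sum_antidiagonal_eq_sum_range_succ_mk, Finset.sum_range_succ, ySer0]

lemma ySq1 : PowerSeries.coeff 1 (ySer^2) = 2 := by
  rw [pow_two, PowerSeries.coeff_mul]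
  simp [Nat.sum_antidiagonal_eq_sum_range_succ_mk, Finset.sum_range_succ, ySer0, ySer1]
  norm_num

lemma ySq2 : PowerSeries.coeff 2 (ySer^2) = 5 := by
  rw [pow_two, PowerSeries.coeff_mul]
  simp [Nat.sum_antidiagonal_eq_sum_range_succ_mk, Finset.sum_range_succ, ySer0, ySer1, ySer2]
  norm_num

lemma dco_Dd_small : ∀ p q, p + q ≤ 2 → dco p q Dd =
    if p = 2 ∧ q = 0 then 1 else if p = 1 ∧ q = 1 then -2 else if p = 0 ∧ q = 2 then 1 else 0 := by
  intro p q h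
  have hp : p ≤ 2 := by omega
  have hq : q ≤ 2 := by omega
  interval_cases p <;> interval_cases q <;> first | omega |
  · unfold Dd
    rw [dco_mul]
    simp [Nat.sum_antidiagonal_eq_sum_range_succ_mk, Finset.sum_range_succ,
      dco_sub, dco_V1, dco_V2, dco_yV1, dco_yV2, ySer0, ySer1, ySer2]
    try norm_num

lemma Gg_small : ∀ p q, p + q ≤ 2 → dco p q Gg = 0 := by
  intro p q h
  have hp : p ≤ 2 := by omega
  have hq : q ≤ 2 := by omega
  interval_cases p <;> interval_cases q <;> first | omega |
  · unfold Gg Dd Nn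
    simp [dco_sub, dco_mul, Nat.sum_antidiagonal_eq_sum_range_succ_mk, Finset.sum_range_succ,
      dco_V1, dco_V2, dco_yV1, dco_yV2, dco_yV1sq, dco_one, dco_Sser,
      ySer0, ySer1, ySer2, ySq0, ySq1, ySq2]
    try norm_num

lemma Gg_zero : ∀ d p q, p + q = d → dco p q Gg = 0 := by
  intro d
  induction d using Nat.strong_induction_on with
  | _ d ih =>
    rcases Nat.lt_or_ge d 3 with hd | hd
    · intro p q hpq
      exact Gg_small p q (by omega)
    · intro p
      induction p using Nat.strong_induction_on with
      | _ p ihp =>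
        intro q hpq
        have hkc := keycoeff p (q+2)
        have hzero : ∀ x ∈ antidiagonal (q+2), ∀ y ∈ antidiagonal p,
            ¬(y.1 = 0 ∧ x.1 = 2) →
            dco y.1 x.1 Dd * (((y.2:ℚ) + (x.2:ℚ)) - ((y.1:ℚ) + (x.1:ℚ))) * dco y.2 x.2 Gg
              = 0 := by
          intro x hx y hy hne
          have hx' : x.1 + x.2 = q + 2 := Finset.HasAntidiagonal.mem_antidiagonal.mp hx
          have hy' : y.1 + y.2 = p := Finset.HasAntidiagonal.mem_antidiagonal.mp hy
          rcases Nat.lt_or_ge (y.1 + x.1) 2 with h2 | h2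
          · rw [dco_Dd_small y.1 x.1 (by omega)]
            rw [if_neg (by omega), if_neg (by omega), if_neg (by omega)]
            ring
          · rcases Nat.lt_or_ge (y.1 + x.1) 3 with h3 | h3
            · -- y.1 + x.1 = 2, not (0,2): so (1,1) or (2,0)
              have hy1 : 1 ≤ y.1 := by
                rcases Nat.eq_zero_or_pos y.1 with h0 | h1
                · exact absurd ⟨h0, by omega⟩ hne
                · exact h1
              have hGz : dco y.2 x.2 Gg = 0 := ihp y.2 (by omega) x.2 (by omega)
              rw [hGz]; ring
            · have hGz : dco y.2 x.2 Gg = 0 := ih (y.2 + x.2) (by omega) y.2 x.2 rfl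
              rw [hGz]; ring
        have houter := Finset.sum_eq_single_of_mem (s := antidiagonal (q+2)) ((2:ℕ), q)
          (Finset.HasAntidiagonal.mem_antidiagonal.mpr (by omega))
          (fun b hb hbne => Finset.sum_eq_zero (fun y hy => by
            refine hzero b hb y hy ?_
            rintro ⟨h1, h2⟩
            apply hbne
            have hb' := Finset.HasAntidiagonal.mem_antidiagonal.mp hb
            have hb2 : b.2 = q := by omega
            exact Prod.ext h2 hb2))
        rw [houter] at hkc
        have hinner := Finset.sum_eq_single_of_mem (s := antidiagonal p) ((0:ℕ), p)
          (Finset.HasAntidiagonal.mem_antidiagonal.mpr (by omega))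
          (fun y hy hyne => by
            refine hzero (2, q) (Finset.HasAntidiagonal.mem_antidiagonal.mpr (by omega)) y hy ?_
            rintro ⟨h1, h2⟩
            apply hyne
            have hy' := Finset.HasAntidiagonal.mem_antidiagonal.mp hy
            have hy2 : y.2 = p := by omega
            exact Prod.ext h1 hy2)
        rw [hinner] at hkc
        simp only at hkc
        rw [dco_Dd_small 0 2 (by omega)] at hkc
        rw [if_neg (by omega), if_neg (by omega), if_pos (by omega)] at hkc
        push_cast at hkc
        rcases mul_eq_zero.mp hkc with h | h
        · exfalso
          have h3 : (3:ℚ) ≤ (p:ℚ) + (q:ℚ) := by exact_mod_cast (by omega : 3 ≤ p + q)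
          rcases mul_eq_zero.mp h with h' | h'
          · norm_num at h'
          · nlinarith [h']
        · exact h


end SeriesPart

/-- **convolution identity for tree-type series.**
`∑_{j,k≥1} (1/(j+k)) (j^{j+1}/j!) V_1^j (k^k/k!) V_2^k
  = V_2/(V_2-V_1) - y(V_1)² (y(V_2)-1)/(y(V_2)-y(V_1))`
as formal power series in `V_1, V_2`; since the right-hand side's combination is
a genuine power series, the identity is equivalently stated in the cleared form
`S · (V_2-V_1)(y(V_2)-y(V_1))
  = V_2 (y(V_2)-y(V_1)) - y(V_1)² (y(V_2)-1)(V_2-V_1)`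
(the factors `V_2-V_1` and `y(V_2)-y(V_1)` being nonzero in the integral domain
`ℚ[[V_1,V_2]]`). -/
theorem convolution_tree_identity :
    Sser * (V2 - V1) * (yV2 - yV1) =
      V2 * (yV2 - yV1) - yV1 ^ 2 * (yV2 - 1) * (V2 - V1) := by
  have hG : Gg = 0 := by
    refine PowerSeries.ext fun q => ?_
    refine PowerSeries.ext fun p => ?_
    have h := Gg_zero (p+q) p q rfl
    unfold dco at h
    simpa using h
  unfold Gg Dd Nn at hG
  linear_combination hG
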